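/- (Kesten) For the simple random walk on a connected d-regular graph Γ, the spectral radius μ = limsup_n (p^{(n)}(x,x))^{1/n} satisfies 2√(d−1)/d ≤ μ ≤ 1, with equality μ = 2√(d−1)/d if Γ is the d-regular tree. -/

import Mathlib

open Filter

open SimpleGraph List Function

namespace KestenAux

variable {V : Type*} {Γ : SimpleGraph V} {K : ℕ}

open scoped Classical in
noncomputable def nbr (e : ∀ v : V, Γ.neighborSet v ≃ Fin (K + 1)) (u p : V) (ℓ : Fin K) : V :=
  if h : Γ.Adj u p then ((e u).symm ((e u ⟨p, h⟩).succAbove ℓ) : V) else u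

noncomputable def nbr0 (e : ∀ v : V, Γ.neighborSet v ≃ Fin (K + 1)) (u : V) (ℓ : Fin K) : V :=
  ((e u).symm ℓ.castSucc : V)

variable {e : ∀ v : V, Γ.neighborSet v ≃ Fin (K + 1)} {u p v : V} {ℓ : Fin K}

lemma nbr_ne (h : Γ.Adj u p) : nbr e u p ℓ ≠ p := by
  rw [nbr, dif_pos h]
  intro hc
  have h2 : (e u).symm ((e u ⟨p, h⟩).succAbove ℓ) = ⟨p, h⟩ := Subtype.ext hc
  have h3 : (e u ⟨p, h⟩).succAbove ℓ = e u ⟨p, h⟩ := by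
    simpa [Equiv.symm_apply_eq] using h2
  exact Fin.succAbove_ne _ _ h3

lemma nbr_inj (h : Γ.Adj u p) {ℓ₁ ℓ₂ : Fin K} (hn : nbr e u p ℓ₁ = nbr e u p ℓ₂) : ℓ₁ = ℓ₂ := by
  simp only [nbr, dif_pos h] at hn
  exact Fin.succAbove_right_injective ((e u).symm.injective (Subtype.ext hn))

lemma nbr0_inj {ℓ₁ ℓ₂ : Fin K} (hn : nbr0 e u ℓ₁ = nbr0 e u ℓ₂) : ℓ₁ = ℓ₂ :=
  Fin.castSucc_injective _ ((e u).symm.injective (Subtype.ext hn))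

def Good (Γ : SimpleGraph V) (x : V) (st : List V) : Prop :=
  st ≠ [] ∧ st.Chain' Γ.Adj ∧ st.getLast? = some x

section B
variable (e : ∀ v : V, Γ.neighborSet v ≃ Fin (K + 1)) (x : V)

noncomputable def Lstep : List V → Option (Fin K) → List V
  | st, none => st.tail
  | [], some _ => []
  | [u], some ℓ => [nbr0 e u ℓ, u]
  | u :: p :: t, some ℓ => nbr e u p ℓ :: u :: p :: t

noncomputable def Ltrace : List V → List (Option (Fin K)) → List V
  | _, [] => []
  | st, a :: r => (Lstep e st a).headD x :: Ltrace (Lstep e st a) r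

def Ok : ℕ → List (Option (Fin K)) → Prop
  | h, [] => h = 0
  | h, (none :: r) => ∃ h', h = h' + 1 ∧ Ok h' r
  | h, (some _ :: r) => Ok (h + 1) r

variable {e x}

lemma good_push {u v : V} {t : List V} (hg : Good Γ x (u :: t)) (hadj : Γ.Adj v u) :
    Good Γ x (v :: u :: t) := by
  obtain ⟨-, hc, hl⟩ := hg
  exact ⟨cons_ne_nil _ _, List.isChain_cons_cons.mpr ⟨hadj, hc⟩, by rwa [List.getLast?_cons_cons]⟩

lemma good_pop {u v : V} {t : List V} (hg : Good Γ x (u :: v :: t)) : Good Γ x (v :: t) := by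
  obtain ⟨-, hc, hl⟩ := hg
  exact ⟨cons_ne_nil _ _, (List.isChain_cons_cons.mp hc).2, by rwa [List.getLast?_cons_cons] at hl⟩

lemma ltrace_length : ∀ (r : List (Option (Fin K))) (st : List V),
    (Ltrace e x st r).length = r.length
  | [], _ => rfl
  | _ :: r, st => by simp [Ltrace, ltrace_length r]

/-- The machine trace of a valid (Dyck) instruction list is a closed walk list. -/
lemma ltrace_spec : ∀ (r : List (Option (Fin K))) (st : List V) (h : ℕ), Ok h r →
    Good Γ x st → st.length = h + 1 →
    (st.headD x :: Ltrace e x st r).Chain' Γ.Adj ∧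
      (st.headD x :: Ltrace e x st r).getLast? = some x := by
  intro r
  induction r with
  | nil =>
    intro st h hok hg hl
    obtain rfl : h = 0 := hok
    rcases st with - | ⟨u, st⟩
    · exact absurd rfl hg.1
    rcases st with - | ⟨v, st⟩
    · refine ⟨List.isChain_singleton _, ?_⟩
      simpa [Ltrace] using hg.2.2
    · simp at hl
  | cons a r ih =>
    intro st h hok hg hl
    rcases st with - | ⟨u, st⟩
    · exact absurd rfl hg.1
    rcases a with - | ℓ
    · -- pop
      obtain ⟨h', rfl, hok'⟩ := hok
      rcases st with - | ⟨p, t⟩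
      · simp at hl
      have hadj : Γ.Adj u p := (List.isChain_cons_cons.mp hg.2.1).1
      have hg' : Good Γ x (p :: t) := good_pop hg
      have := ih (p :: t) h' hok' hg' (by simpa using hl)
      rw [Ltrace]
      refine ⟨List.isChain_cons_cons.mpr ⟨by simpa [Lstep] using hadj, by simpa [Lstep, List.Chain'] using this.1⟩, ?_⟩
      rw [List.getLast?_cons_cons]
      simpa [Lstep] using this.2
    · -- push
      have hok' : Ok (h + 1) r := hok
      rcases st with - | ⟨p, t⟩
      · -- stack [u]
        have hadj : Γ.Adj u (nbr0 e u ℓ) := ((e u).symm _).2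
        have hg' : Good Γ x (nbr0 e u ℓ :: [u]) := good_push hg hadj.symm
        have := ih _ (h + 1) hok' hg' (by simp at hl ⊢; omega)
        rw [Ltrace]
        refine ⟨List.isChain_cons_cons.mpr ⟨by simpa [Lstep] using hadj, by simpa [Lstep, List.Chain'] using this.1⟩, ?_⟩
        rw [List.getLast?_cons_cons]
        simpa [Lstep] using this.2
      · have hadjup : Γ.Adj u p := (List.isChain_cons_cons.mp hg.2.1).1
        have hadj : Γ.Adj u (nbr e u p ℓ) := by
          rw [nbr, dif_pos hadjup]; exact ((e u).symm _).2
        have hg' : Good Γ x (nbr e u p ℓ :: u :: p :: t) := good_push hg hadj.symm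
        have := ih _ (h + 1) hok' hg' (by simp at hl ⊢; omega)
        rw [Ltrace]
        refine ⟨List.isChain_cons_cons.mpr ⟨by simpa [Lstep] using hadj, by simpa [Lstep, List.Chain'] using this.1⟩, ?_⟩
        rw [List.getLast?_cons_cons]
        simpa [Lstep] using this.2

/-- The machine trace determines the instruction list. -/
lemma ltrace_inj : ∀ (r₁ r₂ : List (Option (Fin K))) (st : List V) (h : ℕ), Ok h r₁ → Ok h r₂ →
    r₁.length = r₂.length → Good Γ x st → st.length = h + 1 →
    Ltrace e x st r₁ = Ltrace e x st r₂ → r₁ = r₂ := by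
  intro r₁
  induction r₁ with
  | nil =>
    intro r₂ st h _ _ hlen _ _ _
    exact (List.length_eq_zero_iff.mp hlen.symm).symm
  | cons a₁ r₁ ih =>
    intro r₂ st h hok₁ hok₂ hlen hg hl htr
    rcases r₂ with - | ⟨a₂, r₂⟩
    · exact absurd hlen (by simp)
    rcases st with - | ⟨u, st⟩
    · exact absurd rfl hg.1
    rw [Ltrace, Ltrace] at htr
    have hhead := (List.cons.injEq _ _ _ _ ▸ htr).1
    have htail := (List.cons.injEq _ _ _ _ ▸ htr).2
    have haa : a₁ = a₂ := by
      rcases a₁ with - | ℓ₁ <;> rcases a₂ with - | ℓ₂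
      · rfl
      · -- pop vs push: impossible
        obtain ⟨h', rfl, -⟩ := hok₁
        rcases st with - | ⟨p, t⟩
        · simp at hl
        · have hadjup : Γ.Adj u p := (List.isChain_cons_cons.mp hg.2.1).1
          have : p = nbr e u p ℓ₂ := by simpa [Lstep] using hhead
          exact absurd this.symm (nbr_ne hadjup)
      · obtain ⟨h', rfl, -⟩ := hok₂
        rcases st with - | ⟨p, t⟩
        · simp at hl
        · have hadjup : Γ.Adj u p := (List.isChain_cons_cons.mp hg.2.1).1
          have : nbr e u p ℓ₁ = p := by simpa [Lstep] using hhead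
          exact absurd this (nbr_ne hadjup)
      · -- push vs push
        rcases st with - | ⟨p, t⟩
        · have : nbr0 e u ℓ₁ = nbr0 e u ℓ₂ := by simpa [Lstep] using hhead
          rw [nbr0_inj this]
        · have hadjup : Γ.Adj u p := (List.isChain_cons_cons.mp hg.2.1).1
          have : nbr e u p ℓ₁ = nbr e u p ℓ₂ := by simpa [Lstep] using hhead
          rw [nbr_inj hadjup this]
    subst haa
    congr 1
    -- now recurse
    rcases a₁ with - | ℓ
    · obtain ⟨h', rfl, hok₁'⟩ := hok₁
      have hok₂' : Ok h' r₂ := by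
        obtain ⟨h'', he, hh⟩ := hok₂
        have : h'' = h' := by omega
        exact this ▸ hh
      rcases st with - | ⟨p, t⟩
      · simp at hl
      exact ih r₂ (p :: t) h' hok₁' hok₂' (by simpa using hlen) (good_pop hg) (by simpa using hl) htail
    · rcases st with - | ⟨p, t⟩
      · have hadj : Γ.Adj u (nbr0 e u ℓ) := ((e u).symm _).2
        exact ih r₂ _ (h + 1) hok₁ hok₂ (by simpa using hlen) (good_push hg hadj.symm)
          (by simp at hl ⊢; omega) htail
      · have hadjup : Γ.Adj u p := (List.isChain_cons_cons.mp hg.2.1).1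
        have hadj : Γ.Adj u (nbr e u p ℓ) := by
          rw [nbr, dif_pos hadjup]; exact ((e u).symm _).2
        exact ih r₂ _ (h + 1) hok₁ hok₂ (by simpa using hlen) (good_push hg hadj.symm)
          (by simp at hl ⊢; omega) htail

end B

/-! ### attaching labels to a Dyck word -/

def assign : List DyckStep → List (Fin K) → List (Option (Fin K))
  | [], _ => []
  | .U :: _, [] => []
  | .U :: t, ℓ :: q => some ℓ :: assign t q
  | .D :: t, q => none :: assign t q

lemma assign_length : ∀ (w : List DyckStep) (q : List (Fin K)),
    q.length = w.count .U → (assign w q).length = w.length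
  | [], _, _ => rfl
  | .U :: t, [], h => by simp [List.count_cons] at h
  | .U :: t, ℓ :: q, h => by
    rw [assign, length_cons, length_cons, assign_length t q]
    simp [List.count_cons] at h
    omega
  | .D :: t, q, h => by
    rw [assign, length_cons, length_cons, assign_length t q]
    simpa [List.count_cons] using h

lemma assign_inj : ∀ (w₁ w₂ : List DyckStep) (q₁ q₂ : List (Fin K)),
    q₁.length = w₁.count .U → q₂.length = w₂.count .U →
    assign w₁ q₁ = assign w₂ q₂ → w₁ = w₂ ∧ q₁ = q₂ := by
  intro w₁
  induction w₁ with
  | nil =>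
    intro w₂ q₁ q₂ h₁ h₂ he
    rcases w₂ with - | ⟨a, t⟩
    · simp at h₁ h₂
      exact ⟨rfl, by rw [h₁, h₂]⟩
    · cases a
      · rcases q₂ with - | ⟨ℓ, q₂⟩
        · simp [List.count_cons] at h₂
        · exact absurd he (by simp [assign])
      · exact absurd he (by simp [assign])
  | cons a t ih =>
    intro w₂ q₁ q₂ h₁ h₂ he
    rcases w₂ with - | ⟨b, t₂⟩
    · cases a
      · rcases q₁ with - | ⟨ℓ, q₁⟩
        · simp [List.count_cons] at h₁
        · exact absurd he (by simp [assign])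
      · exact absurd he (by simp [assign])
    cases a <;> cases b
    · -- U U
      rcases q₁ with - | ⟨ℓ₁, q₁⟩
      · simp [List.count_cons] at h₁
      rcases q₂ with - | ⟨ℓ₂, q₂⟩
      · simp [List.count_cons] at h₂
      rw [assign, assign] at he
      have h3 := (List.cons.injEq _ _ _ _ ▸ he)
      obtain ⟨rfl⟩ : ℓ₁ = ℓ₂ := by simpa using h3.1
      have h₁' : q₁.length = t.count .U := by simp [List.count_cons] at h₁; omega
      have h₂' : q₂.length = t₂.count .U := by simp [List.count_cons] at h₂; omega
      obtain ⟨rfl, rfl⟩ := ih t₂ q₁ q₂ h₁' h₂' h3.2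
      exact ⟨rfl, rfl⟩
    · -- U D
      rcases q₁ with - | ⟨ℓ₁, q₁⟩
      · simp [List.count_cons] at h₁
      · exact absurd he (by simp [assign])
    · -- D U
      rcases q₂ with - | ⟨ℓ₂, q₂⟩
      · simp [List.count_cons] at h₂
      · exact absurd he (by simp [assign])
    · -- D D
      rw [assign, assign] at he
      have h3 := (List.cons.injEq _ _ _ _ ▸ he)
      have h₁' : q₁.length = t.count .U := by simpa [List.count_cons] using h₁
      have h₂' : q₂.length = t₂.count .U := by simpa [List.count_cons] using h₂
      obtain ⟨rfl, rfl⟩ := ih t₂ q₁ q₂ h₁' h₂' h3.2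
      exact ⟨rfl, rfl⟩

lemma assign_ok : ∀ (w : List DyckStep) (h : ℕ) (q : List (Fin K)),
    (∀ i, (w.take i).count .D ≤ h + (w.take i).count .U) →
    (w.count .D = h + w.count .U) →
    q.length = w.count .U →
    Ok h (assign w q) := by
  intro w
  induction w with
  | nil => intro h q _ hbal _; simpa [Ok, assign] using hbal.symm
  | cons a t ih =>
    intro h q hpre hbal hq
    cases a
    · -- U
      rcases q with - | ⟨ℓ, q⟩
      · simp [List.count_cons] at hq
      rw [assign]
      show Ok (h + 1) (assign t q)
      refine ih (h + 1) q (fun i => ?_) ?_ ?_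
      · have := hpre (i + 1)
        simp [List.count_cons] at this ⊢
        omega
      · simp [List.count_cons] at hbal; omega
      · simp [List.count_cons] at hq; omega
    · -- D
      rw [assign]
      have hh : 0 < h := by
        have := hpre 1
        simp [List.count_cons] at this
        omega
      refine ⟨h - 1, by omega, ?_⟩
      refine ih (h - 1) q (fun i => ?_) ?_ ?_
      · have := hpre (i + 1)
        simp [List.count_cons] at this ⊢
        omega
      · simp [List.count_cons] at hbal; omega
      · simpa [List.count_cons] using hq

/-! ### building a walk from a list -/

def mkW (Γ : SimpleGraph V) : (u : V) → (l : List V) → List.Chain Γ.Adj u l →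
    Γ.Walk u ((u :: l).getLast (cons_ne_nil u l))
  | _, [], _ => Walk.nil
  | _, _ :: t, h =>
    Walk.cons (List.chain_cons.mp h).1 (mkW Γ _ t (List.chain_cons.mp h).2)

lemma mkW_support (Γ : SimpleGraph V) : ∀ (u : V) (l : List V) (hc : List.Chain Γ.Adj u l),
    (mkW Γ u l hc).support = u :: l
  | _, [], _ => rfl
  | u, v :: t, h => by
    rw [mkW]; exact congrArg (u :: ·) (mkW_support Γ v t _)

lemma mkW_length (Γ : SimpleGraph V) : ∀ (u : V) (l : List V) (hc : List.Chain Γ.Adj u l),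
    (mkW Γ u l hc).length = l.length
  | _, [], _ => rfl
  | u, v :: t, h => by
    rw [mkW]; exact congrArg (· + 1) (mkW_length Γ v t _)

/-- a walk in a simple graph is determined by its support -/
lemma support_inj {u v : V} (w₁ : Γ.Walk u v) : ∀ (w₂ : Γ.Walk u v),
    w₁.support = w₂.support → w₁ = w₂ := by
  induction w₁ with
  | nil =>
    intro w₂ h
    cases w₂ with
    | nil => rfl
    | cons h₂ p₂ =>
      rw [Walk.support_nil, Walk.support_cons] at h
      have := congrArg List.length h
      simp at this
  | cons h₁ p₁ ih =>
    intro w₂ h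
    cases w₂ with
    | nil =>
      rw [Walk.support_nil, Walk.support_cons] at h
      have := congrArg List.length h
      simp at this
    | cons h₂ p₂ =>
      rw [Walk.support_cons, Walk.support_cons] at h
      have h' : p₁.support = p₂.support := by
        exact (List.cons.injEq _ _ _ _ ▸ h).2
      have hb := h'
      rw [Walk.support_eq_cons p₁, Walk.support_eq_cons p₂] at hb
      obtain rfl := (List.cons.injEq _ _ _ _ ▸ hb).1
      exact congrArg _ (ih p₂ h')

open scoped Classical in
noncomputable def codeAll (e : ∀ v : V, Γ.neighborSet v ≃ Fin (K + 1)) : V → List V → List (Fin (K + 1))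
  | _, [] => []
  | u, v :: t => (if h : Γ.Adj u v then e u ⟨v, h⟩ else 0) :: codeAll e v t

lemma codeAll_length (e : ∀ v : V, Γ.neighborSet v ≃ Fin (K + 1)) :
    ∀ (u : V) (l : List V), (codeAll e u l).length = l.length
  | _, [] => rfl
  | u, v :: t => by rw [codeAll, length_cons, length_cons, codeAll_length e v t]

lemma codeAll_inj (e : ∀ v : V, Γ.neighborSet v ≃ Fin (K + 1)) :
    ∀ (l₁ l₂ : List V) (u : V), List.Chain Γ.Adj u l₁ → List.Chain Γ.Adj u l₂ →
      codeAll e u l₁ = codeAll e u l₂ → l₁ = l₂ := by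
  intro l₁
  induction l₁ with
  | nil =>
    intro l₂ u _ _ hc
    rcases l₂ with - | ⟨v, t⟩
    · rfl
    · exact absurd (congrArg List.length hc) (by simp [codeAll_length, codeAll])
  | cons v₁ t₁ ih =>
    intro l₂ u hc₁ hc₂ hc
    rcases l₂ with - | ⟨v₂, t₂⟩
    · exact absurd (congrArg List.length hc) (by simp [codeAll_length, codeAll])
    rw [codeAll, codeAll] at hc
    have h1 := (List.cons.injEq _ _ _ _ ▸ hc).1
    have h2 := (List.cons.injEq _ _ _ _ ▸ hc).2
    rw [dif_pos (List.chain_cons.mp hc₁).1, dif_pos (List.chain_cons.mp hc₂).1] at h1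
    obtain rfl : v₁ = v₂ := congrArg Subtype.val ((e u).injective h1)
    rw [ih t₂ v₁ (List.chain_cons.mp hc₁).2 (List.chain_cons.mp hc₂).2 h2]

/-! ### counting bounds -/

section Counting

lemma finite_walks (e : ∀ v : V, Γ.neighborSet v ≃ Fin (K + 1)) (x : V) (n : ℕ) : Finite {w : Γ.Walk x x // w.length = n} := by
  classical
  haveI : Γ.LocallyFinite := fun v => Fintype.ofEquiv _ (e v).symm
  exact @Finite.of_fintype _ (Γ.fintypeSetWalkLength x x n)

lemma card_walks_le (e : ∀ v : V, Γ.neighborSet v ≃ Fin (K + 1)) (x : V) (n : ℕ) :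
    Nat.card {w : Γ.Walk x x // w.length = n} ≤ (K + 1) ^ n := by
  classical
  have hF : Function.Injective (fun w : {w : Γ.Walk x x // w.length = n} =>
      (⟨codeAll e x w.1.support.tail, by
        rw [codeAll_length]
        have h1 := SimpleGraph.Walk.length_support w.1
        have h2 := w.2
        rw [List.length_tail, h1, h2]
        omega⟩ : {l : List (Fin (K + 1)) // l.length = n})) := by
    intro ⟨w₁, h₁⟩ ⟨w₂, h₂⟩ h
    simp only [Subtype.mk.injEq] at h ⊢
    have hch : ∀ (w : Γ.Walk x x), List.Chain Γ.Adj x w.support.tail := by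
      intro w
      have := w.isChain_adj_support
      rwa [SimpleGraph.Walk.support_eq_cons w] at this
    have hl := codeAll_inj e _ _ x (hch w₁) (hch w₂) h
    apply support_inj
    rw [SimpleGraph.Walk.support_eq_cons w₁, SimpleGraph.Walk.support_eq_cons w₂, hl]
  haveI : Finite {l : List (Fin (K + 1)) // l.length = n} :=
    Finite.of_equiv _ (Equiv.vectorEquivFin (Fin (K + 1)) n).symm
  calc Nat.card {w : Γ.Walk x x // w.length = n}
      ≤ Nat.card {l : List (Fin (K + 1)) // l.length = n} :=
        Nat.card_le_card_of_injective _ hF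
    _ = (K + 1) ^ n := by
        have h1 : Nat.card {l : List (Fin (K + 1)) // l.length = n}
            = Nat.card (Fin n → Fin (K + 1)) := Nat.card_congr (Equiv.vectorEquivFin _ _)
        rw [h1, Nat.card_eq_fintype_card]
        simp

lemma card_walks_ge (e : ∀ v : V, Γ.neighborSet v ≃ Fin (K + 1)) (x : V) (n : ℕ) :
    catalan n * K ^ n ≤ Nat.card {w : Γ.Walk x x // w.length = 2 * n} := by
  classical
  haveI := finite_walks e x (2 * n)
  set P := {w : DyckWord // w.semilength = n} × {q : List (Fin K) // q.length = n} with hP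
  have key : ∀ z : P, Ok (K := K) 0 (assign z.1.1.toList z.2.1) ∧
      (assign z.1.1.toList z.2.1).length = 2 * n := by
    rintro ⟨⟨w, hw⟩, ⟨q, hq⟩⟩
    have hq' : q.length = w.toList.count DyckStep.U := by rw [hq, ← hw]; rfl
    constructor
    · exact assign_ok w.toList 0 q (fun i => by simpa using w.count_D_le_count_U i)
        (by simpa using w.count_U_eq_count_D.symm) hq'
    · rw [assign_length _ _ hq']
      have := w.two_mul_semilength_eq_length
      omega
  have goodx : Good Γ x [x] := ⟨cons_ne_nil _ _, List.isChain_singleton _, rfl⟩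
  have spec : ∀ z : P, (x :: Ltrace e x [x] (assign z.1.1.toList z.2.1)).Chain' Γ.Adj ∧
      (x :: Ltrace e x [x] (assign z.1.1.toList z.2.1)).getLast? = some x := by
    intro z
    exact ltrace_spec (e := e) (assign z.1.1.toList z.2.1) [x] 0 (key z).1 goodx rfl
  -- build the walk
  have hlastfun : ∀ z : P, (x :: Ltrace e x [x] (assign z.1.1.toList z.2.1)).getLast
      (cons_ne_nil _ _) = x := by
    intro z
    have h2 := (spec z).2
    rwa [List.getLast?_eq_getLast (cons_ne_nil _ _), Option.some.injEq] at h2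
  have hlen : ∀ z : P, (Ltrace e x [x] (assign z.1.1.toList z.2.1)).length = 2 * n := by
    intro z
    rw [ltrace_length]
    exact (key z).2
  let G : P → {w : Γ.Walk x x // w.length = 2 * n} := fun z =>
    ⟨(mkW Γ x (Ltrace e x [x] (assign z.1.1.toList z.2.1)) (spec z).1).copy rfl (hlastfun z),
      by rw [SimpleGraph.Walk.length_copy]; exact (mkW_length Γ _ _ _).trans (hlen z)⟩
  have hGinj : Function.Injective G := by
    rintro ⟨⟨w₁, hw₁⟩, ⟨q₁, hq₁⟩⟩ ⟨⟨w₂, hw₂⟩, ⟨q₂, hq₂⟩⟩ h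
    have hsup := congrArg (fun z => (Subtype.val z).support) h
    simp only [G, SimpleGraph.Walk.support_copy] at hsup
    replace hsup := (mkW_support Γ _ _ _).symm.trans (hsup.trans (mkW_support Γ _ _ _))
    have htr : Ltrace e x [x] (assign w₁.toList q₁) = Ltrace e x [x] (assign w₂.toList q₂) := by
      exact (List.cons.injEq _ _ _ _ ▸ hsup).2
    have hr := ltrace_inj (e := e) (assign w₁.toList q₁) (assign w₂.toList q₂) [x] 0
      (key ⟨⟨w₁, hw₁⟩, ⟨q₁, hq₁⟩⟩).1 (key ⟨⟨w₂, hw₂⟩, ⟨q₂, hq₂⟩⟩).1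
      (by rw [(key ⟨⟨w₁, hw₁⟩, ⟨q₁, hq₁⟩⟩).2, (key ⟨⟨w₂, hw₂⟩, ⟨q₂, hq₂⟩⟩).2]) goodx rfl htr
    have hq₁' : q₁.length = w₁.toList.count DyckStep.U := by rw [hq₁, ← hw₁]; rfl
    have hq₂' : q₂.length = w₂.toList.count DyckStep.U := by rw [hq₂, ← hw₂]; rfl
    obtain ⟨hww, hqq⟩ := assign_inj _ _ _ _ hq₁' hq₂' hr
    obtain rfl := DyckWord.ext hww
    obtain rfl := hqq
    rfl
  have hcard : Nat.card P = catalan n * K ^ n := by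
    rw [Nat.card_prod, Nat.card_eq_fintype_card, DyckWord.card_dyckWord_semilength_eq_catalan]
    congr 1
    have h1 : Nat.card {q : List (Fin K) // q.length = n}
        = Nat.card (Fin n → Fin K) := Nat.card_congr (Equiv.vectorEquivFin _ _)
    rw [h1, Nat.card_eq_fintype_card]
    simp only [Fintype.card_fun, Fintype.card_fin]
  rw [← hcard]
  exact Nat.card_le_card_of_injective G hGinj

end Counting

/-! ### tree lemmas -/

section Tree

/-- In an acyclic connected graph, every path realizes the distance. -/
lemma path_length_eq_dist (hconn : Γ.Connected) (hac : Γ.IsAcyclic) {u v : V}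
    (w : Γ.Walk u v) (hw : w.IsPath) : w.length = Γ.dist u v := by
  classical
  obtain ⟨g, hg⟩ := hconn.exists_walk_length_eq_dist u v
  have hb : g.bypass.length = Γ.dist u v :=
    le_antisymm (hg ▸ g.length_bypass_le) (SimpleGraph.dist_le _)
  have : (⟨w, hw⟩ : Γ.Path u v) = ⟨g.bypass, g.bypass_isPath⟩ :=
    SimpleGraph.isAcyclic_iff_path_unique.mp hac _ _
  rw [show w = g.bypass from congrArg Subtype.val this, hb]

/-- distance to an adjacent vertex changes by exactly one -/
lemma dist_dichotomy (hconn : Γ.Connected) (hac : Γ.IsAcyclic) (x : V) {u v : V}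
    (hadj : Γ.Adj u v) :
    Γ.dist x v = Γ.dist x u + 1 ∨ Γ.dist x u = Γ.dist x v + 1 := by
  classical
  obtain ⟨g, hg⟩ := hconn.exists_walk_length_eq_dist x u
  have hb : g.bypass.length = Γ.dist x u :=
    le_antisymm (hg ▸ g.length_bypass_le) (SimpleGraph.dist_le _)
  by_cases hv : v ∈ g.bypass.support
  · right
    have htake : (g.bypass.takeUntil v hv).length = Γ.dist x v :=
      path_length_eq_dist hconn hac _ (g.bypass_isPath.takeUntil hv)
    have hsplit := congrArg SimpleGraph.Walk.length (g.bypass.take_spec hv)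
    rw [SimpleGraph.Walk.length_append, htake] at hsplit
    have hdrop : 1 ≤ (g.bypass.dropUntil v hv).length := by
      by_contra hzero
      push_neg at hzero
      interval_cases hz : (g.bypass.dropUntil v hv).length
      · have := SimpleGraph.Walk.eq_of_length_eq_zero hz
        exact hadj.ne' this
    have hle : Γ.dist x u ≤ Γ.dist x v + 1 := by
      have := SimpleGraph.dist_le ((g.bypass.takeUntil v hv).concat hadj.symm)
      rwa [SimpleGraph.Walk.length_concat, htake] at this
    omega
  · left
    have hW : (SimpleGraph.Walk.cons hadj.symm g.bypass.reverse).reverse.IsPath := by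
      rw [SimpleGraph.Walk.isPath_reverse_iff, SimpleGraph.Walk.cons_isPath_iff]
      exact ⟨(SimpleGraph.Walk.isPath_reverse_iff _).mpr g.bypass_isPath,
        by rwa [SimpleGraph.Walk.support_reverse, List.mem_reverse]⟩
    have := path_length_eq_dist hconn hac _ hW
    rw [SimpleGraph.Walk.length_reverse, SimpleGraph.Walk.length_cons,
      SimpleGraph.Walk.length_reverse, hb] at this
    omega

lemma parent_exists (hconn : Γ.Connected) (hac : Γ.IsAcyclic) (x : V) {u : V} (hu : u ≠ x) :
    ∃ p, Γ.Adj u p ∧ Γ.dist x p + 1 = Γ.dist x u := by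
  classical
  obtain ⟨g, hg⟩ := hconn.exists_walk_length_eq_dist x u
  have hb : g.bypass.length = Γ.dist x u :=
    le_antisymm (hg ▸ g.length_bypass_le) (SimpleGraph.dist_le _)
  have hpos : 0 < Γ.dist x u := hconn.pos_dist_of_ne (Ne.symm hu)
  cases hrev : g.bypass.reverse with
  | nil =>
    exfalso
    have h2 := congrArg SimpleGraph.Walk.length hrev
    rw [SimpleGraph.Walk.length_reverse] at h2
    simp only [SimpleGraph.Walk.length_nil] at h2
    omega
  | cons hadj q =>
    rename_i pv
    have hrevpath : g.bypass.reverse.IsPath :=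
      (SimpleGraph.Walk.isPath_reverse_iff _).mpr g.bypass_isPath
    rw [hrev, SimpleGraph.Walk.cons_isPath_iff] at hrevpath
    have hq : q.reverse.IsPath := (SimpleGraph.Walk.isPath_reverse_iff _).mpr hrevpath.1
    have hqd : q.reverse.length = Γ.dist x pv := path_length_eq_dist hconn hac _ hq
    have hql : q.length + 1 = Γ.dist x u := by
      have h2 := congrArg SimpleGraph.Walk.length hrev
      rw [SimpleGraph.Walk.length_reverse, SimpleGraph.Walk.length_cons, hb] at h2
      omega
    refine ⟨pv, hadj, ?_⟩
    rw [SimpleGraph.Walk.length_reverse] at hqd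
    omega

/-- uniqueness of the parent in a tree -/
lemma parent_unique (hconn : Γ.Connected) (hac : Γ.IsAcyclic) (x : V) {u p₁ p₂ : V}
    (h₁ : Γ.Adj u p₁ ∧ Γ.dist x p₁ + 1 = Γ.dist x u)
    (h₂ : Γ.Adj u p₂ ∧ Γ.dist x p₂ + 1 = Γ.dist x u) : p₁ = p₂ := by
  classical
  have build : ∀ {p : V}, Γ.Adj u p → Γ.dist x p + 1 = Γ.dist x u →
      ∃ (w : Γ.Walk x u), w.IsPath ∧ w.reverse.support.tail.head? = some p := by
    intro p hadj hdist
    obtain ⟨g, hg⟩ := hconn.exists_walk_length_eq_dist x p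
    have hb : g.bypass.length = Γ.dist x p :=
      le_antisymm (hg ▸ g.length_bypass_le) (SimpleGraph.dist_le _)
    have hunotin : u ∉ g.bypass.support := by
      intro hmem
      have h3 : Γ.dist x u ≤ (g.bypass.takeUntil u hmem).length := SimpleGraph.dist_le _
      have h4 := g.bypass.length_takeUntil_le hmem
      omega
    have hpath : (SimpleGraph.Walk.cons hadj g.bypass.reverse).reverse.IsPath := by
      rw [SimpleGraph.Walk.isPath_reverse_iff, SimpleGraph.Walk.cons_isPath_iff]
      exact ⟨(SimpleGraph.Walk.isPath_reverse_iff _).mpr g.bypass_isPath,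
        by rwa [SimpleGraph.Walk.support_reverse, List.mem_reverse]⟩
    refine ⟨_, hpath, ?_⟩
    rw [SimpleGraph.Walk.reverse_reverse, SimpleGraph.Walk.support_cons,
      SimpleGraph.Walk.support_reverse]
    have : g.bypass.support.reverse.head? = some p := by
      rw [List.head?_reverse]
      have := SimpleGraph.Walk.getLast_support g.bypass
      rw [List.getLast?_eq_getLast (by simp), this]
    simpa using this
  obtain ⟨w₁, hw₁, hh₁⟩ := build h₁.1 h₁.2
  obtain ⟨w₂, hw₂, hh₂⟩ := build h₂.1 h₂.2
  have : (⟨w₁, hw₁⟩ : Γ.Path x u) = ⟨w₂, hw₂⟩ :=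
    SimpleGraph.isAcyclic_iff_path_unique.mp hac _ _
  have hww : w₁ = w₂ := congrArg Subtype.val this
  rw [hww] at hh₁
  rw [hh₁] at hh₂
  exact (Option.some.injEq _ _ ▸ hh₂)

end Tree

/-! ### the encoder (for acyclic graphs) -/

noncomputable def top (e : ∀ v : V, Γ.neighborSet v ≃ Fin (K + 1)) (u : V) : V :=
  ((e u).symm (Fin.last K) : V)

lemma top_adj {u : V} : Γ.Adj u (top e u) := ((e u).symm _).2

lemma nbr0_adj {u : V} {ℓ : Fin K} : Γ.Adj u (nbr0 e u ℓ) := ((e u).symm _).2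

lemma nbr0_exists {u w : V} (hv : Γ.Adj u w) (hne : w ≠ top e u) : ∃ ℓ, nbr0 e u ℓ = w := by
  have hne' : e u ⟨w, hv⟩ ≠ Fin.last K := by
    intro hc
    apply hne
    have : (⟨w, hv⟩ : Γ.neighborSet u) = (e u).symm (Fin.last K) := by
      rw [← hc, Equiv.symm_apply_apply]
    exact congrArg Subtype.val this
  exact ⟨(e u ⟨w, hv⟩).castPred hne', by
    rw [nbr0, Fin.castSucc_castPred, Equiv.symm_apply_apply]⟩

lemma nbr_exists {u w : V} (h : Γ.Adj u p) (hv : Γ.Adj u w) (hne : w ≠ p) :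
    ∃ ℓ, nbr e u p ℓ = w := by
  have hne' : e u ⟨w, hv⟩ ≠ e u ⟨p, h⟩ := by
    intro hc; exact hne (congrArg Subtype.val ((e u).injective hc))
  obtain ⟨ℓ, hℓ⟩ := Fin.exists_succAbove_eq hne'
  exact ⟨ℓ, by rw [nbr, dif_pos h, hℓ, Equiv.symm_apply_apply]⟩

open scoped Classical in
noncomputable def par (Γ : SimpleGraph V) (x u : V) : V :=
  if h : ∃ p, Γ.Adj u p ∧ Γ.dist x p + 1 = Γ.dist x u then h.choose else u

lemma par_spec {x u : V} (h : ∃ p, Γ.Adj u p ∧ Γ.dist x p + 1 = Γ.dist x u) :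
    Γ.Adj u (par Γ x u) ∧ Γ.dist x (par Γ x u) + 1 = Γ.dist x u := by
  rw [par, dif_pos h]; exact h.choose_spec

open scoped Classical in
noncomputable def lab (e : ∀ v : V, Γ.neighborSet v ≃ Fin (K + 1)) (x : V) (ℓ₀ : Fin K)
    (u w : V) : Fin K :=
  if h : ∃ ℓ, nbr e u (par Γ x u) ℓ = w then h.choose else ℓ₀

lemma lab_spec {x u w : V} (ℓ₀ : Fin K) (h : ∃ ℓ, nbr e u (par Γ x u) ℓ = w) :
    nbr e u (par Γ x u) (lab e x ℓ₀ u w) = w := by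
  rw [lab, dif_pos h]; exact h.choose_spec

open scoped Classical in
noncomputable def lab0 (e : ∀ v : V, Γ.neighborSet v ≃ Fin (K + 1)) (x : V) (ℓ₀ : Fin K)
    (w : V) : Fin K :=
  if h : ∃ ℓ, nbr0 e x ℓ = w then h.choose else ℓ₀

lemma lab0_spec {x w : V} (ℓ₀ : Fin K) (h : ∃ ℓ, nbr0 e x ℓ = w) :
    nbr0 e x (lab0 e x ℓ₀ w) = w := by
  rw [lab0, dif_pos h]; exact h.choose_spec

open scoped Classical in
noncomputable def enc (e : ∀ v : V, Γ.neighborSet v ≃ Fin (K + 1)) (x : V) (ℓ₀ : Fin K) :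
    V → Bool → List V → List Bool × List (Fin K)
  | _, _, [] => ([], [])
  | u, σ, v :: t =>
    if u = x then
      if v = top e x then
        (false :: (enc e x ℓ₀ v false t).1, ℓ₀ :: (enc e x ℓ₀ v false t).2)
      else
        (true :: (enc e x ℓ₀ v true t).1, lab0 e x ℓ₀ v :: (enc e x ℓ₀ v true t).2)
    else
      if Γ.dist x v = Γ.dist x u + 1 then
        (σ :: (enc e x ℓ₀ v σ t).1, lab e x ℓ₀ u v :: (enc e x ℓ₀ v σ t).2)
      else
        ((!σ) :: (enc e x ℓ₀ v σ t).1, (enc e x ℓ₀ v σ t).2)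

variable {x u w v : V} {σ : Bool} {t : List V} {ℓ₀ : Fin K}

lemma enc_x_top (hv : v = top e x) : enc e x ℓ₀ x σ (v :: t) =
    (false :: (enc e x ℓ₀ v false t).1, ℓ₀ :: (enc e x ℓ₀ v false t).2) := by
  subst hv; simp [enc]

lemma enc_x_nottop (hv : v ≠ top e x) : enc e x ℓ₀ x σ (v :: t) =
    (true :: (enc e x ℓ₀ v true t).1, lab0 e x ℓ₀ v :: (enc e x ℓ₀ v true t).2) := by
  simp [enc, hv]

lemma enc_away (hu : u ≠ x) (hd : Γ.dist x v = Γ.dist x u + 1) : enc e x ℓ₀ u σ (v :: t) =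
    (σ :: (enc e x ℓ₀ v σ t).1, lab e x ℓ₀ u v :: (enc e x ℓ₀ v σ t).2) := by
  simp [enc, hu, hd]

lemma enc_toward (hu : u ≠ x) (hd : ¬ (Γ.dist x v = Γ.dist x u + 1)) : enc e x ℓ₀ u σ (v :: t) =
    ((!σ) :: (enc e x ℓ₀ v σ t).1, (enc e x ℓ₀ v σ t).2) := by
  simp [enc, hu, hd]

lemma dist_one (hconn : Γ.Connected) (hac : Γ.IsAcyclic) {x v : V} (hadj : Γ.Adj x v) :
    Γ.dist x v = 1 := by
  rcases dist_dichotomy hconn hac x hadj with h | h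
  · rw [h, SimpleGraph.dist_self]
  · rw [SimpleGraph.dist_self] at h; omega

lemma enc_len (hconn : Γ.Connected) (hac : Γ.IsAcyclic)
    (e : ∀ v : V, Γ.neighborSet v ≃ Fin (K + 1)) (x : V) (ℓ₀ : Fin K) :
    ∀ (t : List V) (u : V) (σ : Bool), List.Chain Γ.Adj u t → (u :: t).getLast? = some x →
      (enc e x ℓ₀ u σ t).1.length = t.length ∧
        2 * (enc e x ℓ₀ u σ t).2.length + Γ.dist x u = t.length := by
  intro t
  induction t with
  | nil =>
    intro u σ _ hlast
    obtain rfl : u = x := by simpa using hlast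
    simp [enc, SimpleGraph.dist_self]
  | cons v t ih =>
    intro u σ hch hlast
    have hadj : Γ.Adj u v := (List.chain_cons.mp hch).1
    have hch' : List.Chain Γ.Adj v t := (List.chain_cons.mp hch).2
    have hlast' : (v :: t).getLast? = some x := by rwa [List.getLast?_cons_cons] at hlast
    by_cases hux : u = x
    · subst hux
      have hd1 : Γ.dist u v = 1 := dist_one hconn hac hadj
      by_cases hv : v = top e u
      · have := ih v false hch' hlast'
        rw [enc_x_top hv, hd1] at *
        simp only [List.length_cons]
        rw [SimpleGraph.dist_self]
        exact ⟨by omega, by omega⟩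
      · have := ih v true hch' hlast'
        rw [enc_x_nottop hv, hd1] at *
        simp only [List.length_cons]
        rw [SimpleGraph.dist_self]
        exact ⟨by omega, by omega⟩
    · by_cases hdist : Γ.dist x v = Γ.dist x u + 1
      · have := ih v σ hch' hlast'
        rw [enc_away hux hdist, hdist] at *
        simp only [List.length_cons]
        exact ⟨by omega, by omega⟩
      · have hd : Γ.dist x u = Γ.dist x v + 1 :=
          (dist_dichotomy hconn hac x hadj).resolve_left hdist
        have := ih v σ hch' hlast'
        rw [enc_toward hux hdist]
        simp only [List.length_cons]
        exact ⟨by omega, by omega⟩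

lemma enc_inj (hconn : Γ.Connected) (hac : Γ.IsAcyclic)
    (e : ∀ v : V, Γ.neighborSet v ≃ Fin (K + 1)) (x : V) (ℓ₀ : Fin K) :
    ∀ (t₁ t₂ : List V) (u : V) (σ : Bool), List.Chain Γ.Adj u t₁ → List.Chain Γ.Adj u t₂ →
      (u :: t₁).getLast? = some x → (u :: t₂).getLast? = some x →
      t₁.length = t₂.length →
      enc e x ℓ₀ u σ t₁ = enc e x ℓ₀ u σ t₂ → t₁ = t₂ := by
  intro t₁
  induction t₁ with
  | nil =>
    intro t₂ u σ _ _ _ _ hlen _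
    exact (List.length_eq_zero_iff.mp hlen.symm).symm
  | cons v₁ t₁ ih =>
    intro t₂ u σ hc₁ hc₂ hl₁ hl₂ hlen henc
    rcases t₂ with - | ⟨v₂, t₂⟩
    · simp at hlen
    have hadj₁ : Γ.Adj u v₁ := (List.chain_cons.mp hc₁).1
    have hadj₂ : Γ.Adj u v₂ := (List.chain_cons.mp hc₂).1
    have hch₁ : List.Chain Γ.Adj v₁ t₁ := (List.chain_cons.mp hc₁).2
    have hch₂ : List.Chain Γ.Adj v₂ t₂ := (List.chain_cons.mp hc₂).2
    have hla₁ : (v₁ :: t₁).getLast? = some x := by rwa [List.getLast?_cons_cons] at hl₁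
    have hla₂ : (v₂ :: t₂).getLast? = some x := by rwa [List.getLast?_cons_cons] at hl₂
    have hlen' : t₁.length = t₂.length := by simpa using hlen
    by_cases hux : u = x
    · subst hux
      by_cases h₁ : v₁ = top e u <;> by_cases h₂ : v₂ = top e u
      · obtain rfl : v₁ = v₂ := by rw [h₁, h₂]
        rw [enc_x_top h₁, enc_x_top h₁, Prod.mk.injEq, List.cons.injEq, List.cons.injEq] at henc
        rw [ih t₂ v₁ false hch₁ hch₂ hla₁ hla₂ hlen' (Prod.ext henc.1.2 henc.2.2)]
      · rw [enc_x_top h₁, enc_x_nottop h₂, Prod.mk.injEq, List.cons.injEq] at henc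
        exact absurd henc.1.1 (by simp)
      · rw [enc_x_nottop h₁, enc_x_top h₂, Prod.mk.injEq, List.cons.injEq] at henc
        exact absurd henc.1.1 (by simp)
      · rw [enc_x_nottop h₁, enc_x_nottop h₂, Prod.mk.injEq, List.cons.injEq,
          List.cons.injEq] at henc
        obtain rfl : v₁ = v₂ := by
          rw [← lab0_spec (e := e) (x := u) ℓ₀ (nbr0_exists hadj₁ h₁),
            ← lab0_spec (e := e) (x := u) ℓ₀ (nbr0_exists hadj₂ h₂), henc.2.1]
        rw [ih t₂ v₁ true hch₁ hch₂ hla₁ hla₂ hlen' (Prod.ext henc.1.2 henc.2.2)]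
    · have hpar := par_spec (parent_exists hconn hac x hux)
      by_cases d₁ : Γ.dist x v₁ = Γ.dist x u + 1 <;> by_cases d₂ : Γ.dist x v₂ = Γ.dist x u + 1
      · rw [enc_away hux d₁, enc_away hux d₂, Prod.mk.injEq, List.cons.injEq,
          List.cons.injEq] at henc
        obtain rfl : v₁ = v₂ := by
          have hne₁ : v₁ ≠ par Γ x u := by intro hc; rw [← hc] at hpar; omega
          have hne₂ : v₂ ≠ par Γ x u := by intro hc; rw [← hc] at hpar; omega
          rw [← lab_spec (e := e) (x := x) ℓ₀ (nbr_exists hpar.1 hadj₁ hne₁),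
            ← lab_spec (e := e) (x := x) ℓ₀ (nbr_exists hpar.1 hadj₂ hne₂), henc.2.1]
        rw [ih t₂ v₁ σ hch₁ hch₂ hla₁ hla₂ hlen' (Prod.ext henc.1.2 henc.2.2)]
      · rw [enc_away hux d₁, enc_toward hux d₂, Prod.mk.injEq, List.cons.injEq] at henc
        exact absurd henc.1.1 (by simp)
      · rw [enc_toward hux d₁, enc_away hux d₂, Prod.mk.injEq, List.cons.injEq] at henc
        exact absurd henc.1.1 (by simp)
      · rw [enc_toward hux d₁, enc_toward hux d₂, Prod.mk.injEq, List.cons.injEq] at henc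
        obtain rfl : v₁ = v₂ := by
          have e₁ : Γ.dist x u = Γ.dist x v₁ + 1 :=
            (dist_dichotomy hconn hac x hadj₁).resolve_left d₁
          have e₂ : Γ.dist x u = Γ.dist x v₂ + 1 :=
            (dist_dichotomy hconn hac x hadj₂).resolve_left d₂
          exact parent_unique hconn hac x ⟨hadj₁, by omega⟩ ⟨hadj₂, by omega⟩
        rw [ih t₂ v₁ σ hch₁ hch₂ hla₁ hla₂ hlen' (Prod.ext henc.1.2 henc.2)]

section AcyclicCount

lemma walk_valid (x : V) (w : Γ.Walk x x) :
    List.Chain Γ.Adj x w.support.tail ∧ (x :: w.support.tail).getLast? = some x := by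
  constructor
  · have := w.isChain_adj_support
    rwa [SimpleGraph.Walk.support_eq_cons w] at this
  · rw [← SimpleGraph.Walk.support_eq_cons w,
      List.getLast?_eq_getLast (by simp), SimpleGraph.Walk.getLast_support]

lemma tail_len (x : V) (w : Γ.Walk x x) : w.support.tail.length = w.length := by
  rw [List.length_tail, SimpleGraph.Walk.length_support]
  omega

lemma card_walks_odd (hconn : Γ.Connected) (hac : Γ.IsAcyclic)
    (e : ∀ v : V, Γ.neighborSet v ≃ Fin (K + 1)) (x : V) (ℓ₀ : Fin K) (n : ℕ) :
    Nat.card {w : Γ.Walk x x // w.length = 2 * n + 1} = 0 := by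
  haveI : IsEmpty {w : Γ.Walk x x // w.length = 2 * n + 1} := by
    constructor
    rintro ⟨w, hw⟩
    obtain ⟨hch, hlast⟩ := walk_valid x w
    have hl := (enc_len hconn hac e x ℓ₀ w.support.tail x true hch hlast).2
    rw [SimpleGraph.dist_self, tail_len x w, hw] at hl
    omega
  exact Nat.card_of_isEmpty

lemma card_walks_acyclic_le (hconn : Γ.Connected) (hac : Γ.IsAcyclic)
    (e : ∀ v : V, Γ.neighborSet v ≃ Fin (K + 1)) (x : V) (ℓ₀ : Fin K) (n : ℕ) :
    Nat.card {w : Γ.Walk x x // w.length = 2 * n} ≤ 2 ^ (2 * n) * K ^ n := by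
  classical
  haveI : Finite {s : List Bool // s.length = 2 * n} :=
    Finite.of_equiv _ (Equiv.vectorEquivFin Bool (2 * n)).symm
  haveI : Finite {q : List (Fin K) // q.length = n} :=
    Finite.of_equiv _ (Equiv.vectorEquivFin (Fin K) n).symm
  have hs : ∀ w : {w : Γ.Walk x x // w.length = 2 * n},
      (enc e x ℓ₀ x true w.1.support.tail).1.length = 2 * n ∧
        (enc e x ℓ₀ x true w.1.support.tail).2.length = n := by
    rintro ⟨w, hw⟩
    obtain ⟨hch, hlast⟩ := walk_valid x w
    have h1 := (enc_len hconn hac e x ℓ₀ w.support.tail x true hch hlast).1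
    have h2 := (enc_len hconn hac e x ℓ₀ w.support.tail x true hch hlast).2
    rw [SimpleGraph.dist_self, tail_len x w, hw] at h2
    rw [tail_len x w, hw] at h1
    exact ⟨by simpa using h1, by simp; omega⟩
  let F : {w : Γ.Walk x x // w.length = 2 * n} →
      {s : List Bool // s.length = 2 * n} × {q : List (Fin K) // q.length = n} := fun w =>
    (⟨(enc e x ℓ₀ x true w.1.support.tail).1, (hs w).1⟩,
     ⟨(enc e x ℓ₀ x true w.1.support.tail).2, (hs w).2⟩)
  have hFinj : Function.Injective F := by
    rintro ⟨w₁, h₁⟩ ⟨w₂, h₂⟩ h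
    simp only [F, Prod.mk.injEq, Subtype.mk.injEq] at h
    obtain ⟨hc₁, hl₁⟩ := walk_valid x w₁
    obtain ⟨hc₂, hl₂⟩ := walk_valid x w₂
    have htails := enc_inj hconn hac e x ℓ₀ w₁.support.tail w₂.support.tail x true hc₁ hc₂
      hl₁ hl₂ (by rw [tail_len x w₁, tail_len x w₂, h₁, h₂]) (Prod.ext h.1 h.2)
    have hsup : w₁.support = w₂.support := by
      rw [SimpleGraph.Walk.support_eq_cons w₁, SimpleGraph.Walk.support_eq_cons w₂, htails]
    exact Subtype.ext (support_inj w₁ w₂ hsup)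
  calc Nat.card {w : Γ.Walk x x // w.length = 2 * n}
      ≤ Nat.card ({s : List Bool // s.length = 2 * n} × {q : List (Fin K) // q.length = n}) :=
        Nat.card_le_card_of_injective F hFinj
    _ = 2 ^ (2 * n) * K ^ n := by
        rw [Nat.card_prod]
        have h1 : Nat.card {s : List Bool // s.length = 2 * n}
            = Nat.card (Fin (2 * n) → Bool) := Nat.card_congr (Equiv.vectorEquivFin _ _)
        have h2 : Nat.card {q : List (Fin K) // q.length = n}
            = Nat.card (Fin n → Fin K) := Nat.card_congr (Equiv.vectorEquivFin _ _)
        rw [h1, h2, Nat.card_eq_fintype_card, Nat.card_eq_fintype_card]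
        simp

end AcyclicCount

end KestenAux

open Filter KestenAux

/-- Kesten: For the simple random walk on a connected `d`-regular graph
`Γ`, the spectral radius `μ = limsup_n (p⁽ⁿ⁾(x,x))^{1/n}` satisfies
`2√(d-1)/d ≤ μ ≤ 1`, with equality `μ = 2√(d-1)/d` if `Γ` is the `d`-regular tree.
Here `p⁽ⁿ⁾(x,x)`, the probability of returning to `x` in `n` steps, equals
(number of walks of length `n` from `x` to `x`) divided by `dⁿ`. -/
theorem kesten_estimates {V : Type*} (Γ : SimpleGraph V) (hconn : Γ.Connected)
    (d : ℕ) (hd : 2 ≤ d) (hreg : ∀ v : V, (Γ.neighborSet v).ncard = d)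
    (x : V) (p : ℕ → ℝ)
    (hp : ∀ n, p n = (Nat.card {w : Γ.Walk x x // w.length = n} : ℝ) / d ^ n)
    (μ : ℝ) (hμ : μ = Filter.limsup (fun n : ℕ => (p n) ^ ((n : ℝ)⁻¹)) Filter.atTop) :
    2 * Real.sqrt (d - 1) / d ≤ μ ∧ μ ≤ 1 ∧
      (Γ.IsAcyclic → μ = 2 * Real.sqrt (d - 1) / d) := by
  classical
  obtain ⟨K, rfl⟩ : ∃ K : ℕ, d = K + 1 := ⟨d - 1, by omega⟩
  have hK1 : 1 ≤ K := by omega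
  have hfin : ∀ v, (Γ.neighborSet v).Finite := fun v =>
    Set.finite_of_ncard_ne_zero (by rw [hreg v]; omega)
  have e : ∀ v : V, Γ.neighborSet v ≃ Fin (K + 1) := fun v => by
    haveI := (hfin v).fintype
    refine Fintype.equivFinOfCardEq ?_
    rw [← Nat.card_eq_fintype_card, Nat.card_coe_set_eq, hreg v]
  have ℓ₀ : Fin K := ⟨0, by omega⟩
  set D : ℝ := ((K + 1 : ℕ) : ℝ) with hD
  have hD0 : (0 : ℝ) < D := by rw [hD]; positivity
  set ρ : ℝ := 2 * Real.sqrt ((K + 1 : ℕ) - 1) / ((K + 1 : ℕ) : ℝ) with hρdef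
  have hcastK : ((K + 1 : ℕ) : ℝ) - 1 = (K : ℝ) := by push_cast; ring
  have hsqK : Real.sqrt ((K + 1 : ℕ) - 1) = Real.sqrt K := by rw [hcastK]
  have hρpos : 0 < ρ := by
    rw [hρdef, hsqK]
    have : (0:ℝ) < Real.sqrt K := Real.sqrt_pos.mpr (by exact_mod_cast hK1)
    positivity
  have hρsq : ρ ^ 2 = 4 * (K : ℝ) / D ^ 2 := by
    rw [hρdef, hsqK, div_pow, mul_pow, Real.sq_sqrt (by positivity : (0:ℝ) ≤ (K:ℝ)), hD]
    norm_num
  have hρpow : ∀ M : ℕ, ρ ^ (2 * M) = (4 : ℝ) ^ M * (K : ℝ) ^ M / D ^ (2 * M) := by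
    intro M
    rw [pow_mul, hρsq, div_pow, ← mul_pow, pow_mul]
  -- basic facts about p
  have hpnn : ∀ n, 0 ≤ p n := by
    intro n; rw [hp n]; positivity
  have hple1 : ∀ n, p n ≤ 1 := by
    intro n
    rw [hp n, div_le_one (by positivity)]
    have h := card_walks_le e x n
    calc (Nat.card {w : Γ.Walk x x // w.length = n} : ℝ) ≤ (((K+1)^n : ℕ) : ℝ) :=
          Nat.cast_le.mpr h
      _ = ((K+1:ℕ):ℝ) ^ n := by push_cast; ring
  have hfnn : ∀ n : ℕ, 0 ≤ p n ^ ((n:ℝ))⁻¹ := fun n => Real.rpow_nonneg (hpnn n) _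
  have hfle1 : ∀ n : ℕ, p n ^ ((n:ℝ))⁻¹ ≤ 1 := fun n =>
    Real.rpow_le_one (hpnn n) (hple1 n) (by positivity)
  have bddbe : IsBoundedUnder (· ≥ ·) atTop (fun n : ℕ => p n ^ ((n:ℝ))⁻¹) :=
    isBoundedUnder_of ⟨0, fun n => hfnn n⟩
  have cobdd : IsCoboundedUnder (· ≤ ·) atTop (fun n : ℕ => p n ^ ((n:ℝ))⁻¹) :=
    bddbe.isCoboundedUnder_le
  have bddab : IsBoundedUnder (· ≤ ·) atTop (fun n : ℕ => p n ^ ((n:ℝ))⁻¹) :=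
    isBoundedUnder_of ⟨1, fun n => hfle1 n⟩
  -- upper bound μ ≤ 1
  have hμ1 : μ ≤ 1 := by
    rw [hμ]
    exact Filter.limsup_le_of_le cobdd (Filter.Eventually.of_forall hfle1)
  -- lower bound: ∀ c < ρ, c ≤ μ
  have hlow : ∀ c : ℝ, c < ρ → c ≤ μ := by
    intro c hc
    rw [hμ]
    refine Filter.le_limsup_of_frequently_le ?_ bddab
    by_cases hc0 : c ≤ 0
    · exact ((Filter.Eventually.of_forall fun n => hc0.trans (hfnn n)).frequently)
    push_neg at hc0
    have hs1 : 1 < (ρ / c) ^ 2 := by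
      have h1 : 1 < ρ / c := (one_lt_div hc0).mpr hc
      nlinarith
    have hev1 := (tendsto_pow_const_div_const_pow_of_one_lt 2 hs1).eventually_lt_const
      (show (0:ℝ) < 1/4 by norm_num)
    have hfreq : ∀ᶠ M in atTop, c ≤ p (2 * M) ^ (((2 * M : ℕ) : ℝ))⁻¹ := by
      filter_upwards [hev1, eventually_ge_atTop 1] with M hM hM1
      have hM1' : (1:ℝ) ≤ (M:ℝ) := by exact_mod_cast hM1
      have hspos : (0:ℝ) < ((ρ / c) ^ 2) ^ M := by positivity
      have h4M : 4 * (M:ℝ)^2 < ((ρ / c) ^ 2) ^ M := by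
        rw [div_lt_iff₀ hspos] at hM
        nlinarith
      have hpoly : 2 * (M:ℝ) * ((M:ℝ) + 1) ≤ ((ρ / c) ^ 2) ^ M := by nlinarith
      -- catalan bound
      have hcat : (4:ℝ)^M ≤ (2 * (M:ℝ) * ((M:ℝ) + 1)) * catalan M := by
        have h := Nat.four_pow_le_two_mul_self_mul_centralBinom M (by omega)
        rw [← succ_mul_catalan_eq_centralBinom] at h
        calc (4:ℝ)^M = ((4^M : ℕ) : ℝ) := by push_cast; ring
          _ ≤ ((2 * M * ((M + 1) * catalan M) : ℕ) : ℝ) := Nat.cast_le.mpr h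
          _ = (2 * (M:ℝ) * ((M:ℝ) + 1)) * catalan M := by push_cast; ring
      have hwalks : (catalan M : ℝ) * (K:ℝ)^M ≤
          (Nat.card {w : Γ.Walk x x // w.length = 2 * M} : ℝ) := by
        have h := card_walks_ge e x M
        calc (catalan M : ℝ) * (K:ℝ)^M = ((catalan M * K^M : ℕ) : ℝ) := by push_cast; ring
          _ ≤ _ := Nat.cast_le.mpr h
      -- p (2M) ≥ c ^ (2M)
      have hcpow : c ^ (2*M) ≤ p (2*M) := by
        have hKM : (0:ℝ) ≤ (K:ℝ)^M := by positivity
        have key : (4:ℝ)^M * (K:ℝ)^M ≤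
            (2 * (M:ℝ) * ((M:ℝ) + 1)) * (Nat.card {w : Γ.Walk x x // w.length = 2 * M} : ℝ) := by
          calc (4:ℝ)^M * (K:ℝ)^M ≤ ((2 * (M:ℝ) * ((M:ℝ) + 1)) * catalan M) * (K:ℝ)^M :=
                mul_le_mul_of_nonneg_right hcat hKM
            _ = (2 * (M:ℝ) * ((M:ℝ) + 1)) * ((catalan M : ℝ) * (K:ℝ)^M) := by ring
            _ ≤ _ := by
                have hpolypos : (0:ℝ) ≤ 2 * (M:ℝ) * ((M:ℝ) + 1) := by positivity
                exact mul_le_mul_of_nonneg_left hwalks hpolypos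
        have hc2M : c ^ (2*M) * (2 * (M:ℝ) * ((M:ℝ) + 1)) ≤ ρ ^ (2*M) := by
          have hcc : (0:ℝ) < c ^ (2*M) := by positivity
          have h2 : c ^ (2*M) * (((ρ / c) ^ 2) ^ M) = ρ ^ (2*M) := by
            have hEq : ((ρ / c) ^ 2) ^ M = ρ ^ (2*M) / c ^ (2*M) := by
              rw [div_pow, div_pow, ← pow_mul, ← pow_mul]
            rw [hEq]
            field_simp
          calc c ^ (2*M) * (2 * (M:ℝ) * ((M:ℝ) + 1)) ≤ c ^ (2*M) * (((ρ / c) ^ 2) ^ M) :=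
                mul_le_mul_of_nonneg_left hpoly hcc.le
            _ = ρ ^ (2*M) := h2
        rw [hp]
        rw [le_div_iff₀ (by positivity : (0:ℝ) < D ^ (2*M))]
        have hpolypos : (0:ℝ) < 2 * (M:ℝ) * ((M:ℝ) + 1) := by positivity
        have hDpow : (0:ℝ) < D ^ (2*M) := by positivity
        have h5 : c^(2*M) * (2 * (M:ℝ) * ((M:ℝ) + 1)) * D^(2*M) ≤ (4:ℝ)^M * (K:ℝ)^M := by
          have h := mul_le_mul_of_nonneg_right hc2M hDpow.le
          rwa [hρpow M, div_mul_cancel₀ _ hDpow.ne'] at h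
        have h6 := h5.trans key
        rw [← mul_le_mul_iff_right₀ hpolypos]
        calc 2 * (M:ℝ) * ((M:ℝ) + 1) * (c^(2*M) * D^(2*M))
            = c^(2*M) * (2 * (M:ℝ) * ((M:ℝ) + 1)) * D^(2*M) := by ring
          _ ≤ _ := h6
      calc c = (c^(2*M)) ^ (((2*M : ℕ):ℝ))⁻¹ :=
            (Real.pow_rpow_inv_natCast hc0.le (by omega)).symm
        _ ≤ p (2*M) ^ (((2*M : ℕ):ℝ))⁻¹ :=
            Real.rpow_le_rpow (by positivity) hcpow (by positivity)
    have hmap : Tendsto (fun M : ℕ => 2 * M) atTop atTop :=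
      tendsto_atTop_atTop_of_monotone (fun a b h => by omega) (fun b => ⟨b, by omega⟩)
    have hmap' : Filter.map (fun M : ℕ => 2 * M) atTop ≤ atTop := hmap
    have h1 : ∃ᶠ n in Filter.map (fun M : ℕ => 2 * M) atTop, c ≤ p n ^ ((n:ℝ))⁻¹ :=
      (Filter.frequently_map (m := fun M : ℕ => 2 * M)
        (P := fun n => c ≤ p n ^ ((n:ℝ))⁻¹)).mpr hfreq.frequently
    exact h1.filter_mono hmap'
  have hρμ : ρ ≤ μ := by
    by_contra hcon
    push_neg at hcon
    have := hlow ((μ + ρ)/2) (by linarith)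
    linarith
  refine ⟨hρμ, hμ1, ?_⟩
  -- acyclic case
  intro hac
  have hub2 : ∀ᶠ n in atTop, p n ^ ((n:ℝ))⁻¹ ≤ ρ := by
    filter_upwards [eventually_ge_atTop 1] with n hn
    rcases Nat.even_or_odd n with he | ho
    · obtain ⟨m, hm⟩ := he
      have h2m : n = 2 * m := by omega
      subst h2m
      have hm1 : 1 ≤ m := by omega
      have hcard := card_walks_acyclic_le hconn hac e x ℓ₀ m
      have hple : p (2*m) ≤ ρ ^ (2*m) := by
        rw [hp, hρpow m, div_le_div_iff₀ (by positivity) (by positivity)]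
        have hc' : (Nat.card {w : Γ.Walk x x // w.length = 2*m} : ℝ) ≤ (4:ℝ)^m * (K:ℝ)^m := by
          calc (Nat.card {w : Γ.Walk x x // w.length = 2*m} : ℝ)
              ≤ ((2^(2*m) * K^m : ℕ) : ℝ) := Nat.cast_le.mpr hcard
            _ = (4:ℝ)^m * (K:ℝ)^m := by push_cast; rw [pow_mul]; norm_num
        exact mul_le_mul_of_nonneg_right hc' (by positivity)
      calc p (2*m) ^ (((2*m : ℕ):ℝ))⁻¹ ≤ (ρ ^ (2*m)) ^ (((2*m : ℕ):ℝ))⁻¹ :=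
            Real.rpow_le_rpow (hpnn _) hple (by positivity)
        _ = ρ := Real.pow_rpow_inv_natCast hρpos.le (by omega)
    · obtain ⟨m, hm⟩ := ho
      subst hm
      have hz := card_walks_odd hconn hac e x ℓ₀ m
      have hp0 : p (2*m+1) = 0 := by rw [hp, hz]; simp
      rw [hp0, Real.zero_rpow (inv_ne_zero (Nat.cast_ne_zero.mpr (by omega)))]
      exact hρpos.le
  have : μ ≤ ρ := hμ ▸ Filter.limsup_le_of_le cobdd hub2
  linarith
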